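/- Let D be a noncommutative division ring (of arbitrary characteristic), and let f, g : D → D be additive maps such that f(x) = x² · g(x⁻¹) for all nonzero x ∈ D. Then f = g and f(x) = x · f(1) for all x ∈ D. -/

import Mathlib

set_option maxHeartbeats 1000000

section Aux

variable {D : Type*} [DivisionRing D]

/-- char 2 kill, core Hua computation. -/
private lemma kill1core (F : D → D)
    (hadd : ∀ x y : D, F (x + y) = F x + F y)
    (hR : ∀ x : D, x ≠ 0 → F x⁻¹ = -(x⁻¹ * (x⁻¹ * F x)))
    (h2 : (1 : D) + 1 = 0)
    (z t : D) (hk : z * t ≠ t * z) (hFt : F t = 0)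
    (hFztz : F (z * t * z) = 0) : F z = 0 := by
  have hz : z ≠ 0 := by rintro rfl; simp at hk
  have ht : t ≠ 0 := by rintro rfl; simp at hk
  have hF0 : F 0 = 0 := by
    have := hadd 0 0; rw [add_zero] at this; exact (left_eq_add.mp this)
  have hFneg : ∀ x, F (-x) = - F x := by
    intro x; have := hadd x (-x); rw [add_neg_cancel, hF0] at this
    exact (neg_eq_of_add_eq_zero_right this.symm).symm
  have hFsub : ∀ x y, F (x - y) = F x - F y := by
    intro x y; rw [sub_eq_add_neg, hadd, hFneg, ← sub_eq_add_neg]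
  have hneg : ∀ c : D, -c = c := by
    intro c
    have hcc : c + c = 0 := by
      calc c + c = (1 + 1) * c := by rw [add_mul, one_mul]
        _ = 0 := by rw [h2, zero_mul]
    exact neg_eq_of_add_eq_zero_left hcc
  have hFtinv : F t⁻¹ = 0 := by rw [hR t ht, hFt]; simp
  have hp : z * t + 1 ≠ 0 := by
    intro hp0
    have hzt : z * t = -1 := eq_neg_of_add_eq_zero_left hp0
    have htd : t = z⁻¹ * (-1) := by rw [← hzt, inv_mul_cancel_left₀ hz]
    have htz : t * z = -1 := by
      rw [htd, mul_assoc, neg_one_mul, mul_neg, inv_mul_cancel₀ hz]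
    exact hk (hzt.trans htz.symm)
  have hw_eq : z + t⁻¹ = (z * t + 1) * t⁻¹ := by
    rw [add_mul, one_mul, mul_inv_cancel_right₀ ht]
  have hw : z + t⁻¹ ≠ 0 := by
    rw [hw_eq]; exact mul_ne_zero hp (inv_ne_zero ht)
  have hFw : F (z + t⁻¹) = F z := by rw [hadd, hFtinv, add_zero]
  have hv : z⁻¹ * t⁻¹ * (z + t⁻¹)⁻¹ ≠ 0 :=
    mul_ne_zero (mul_ne_zero (inv_ne_zero hz) (inv_ne_zero ht)) (inv_ne_zero hw)
  have hv_sub : z⁻¹ * t⁻¹ * (z + t⁻¹)⁻¹ = z⁻¹ - (z + t⁻¹)⁻¹ := by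
    have e : z⁻¹ - (z + t⁻¹)⁻¹ = z⁻¹ * ((z + t⁻¹) - z) * (z + t⁻¹)⁻¹ := by
      rw [mul_sub, inv_mul_cancel₀ hz, sub_mul, one_mul,
        mul_inv_cancel_right₀ hw]
    rw [e, add_sub_cancel_left]
  have hwinv : (z + t⁻¹)⁻¹ = t * (z * t + 1)⁻¹ := by
    rw [hw_eq, mul_inv_rev, inv_inv]
  have hFv : F (z⁻¹ * t⁻¹ * (z + t⁻¹)⁻¹)
      = (t * (z * t + 1)⁻¹) * ((t * (z * t + 1)⁻¹) * F z) - z⁻¹ * (z⁻¹ * F z) := by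
    rw [hv_sub, hFsub, hR z hz, hR _ hw, hFw, hwinv]
    abel
  have hvinv : (z⁻¹ * t⁻¹ * (z + t⁻¹)⁻¹)⁻¹ = (z + t⁻¹) * (t * z) := by
    rw [mul_inv_rev, mul_inv_rev, inv_inv, inv_inv, inv_inv]
  have hpz : (z + t⁻¹) * (t * z) = (z * t + 1) * z := by
    rw [← mul_assoc, add_mul, inv_mul_cancel₀ ht]
  have hwtz : (z + t⁻¹) * (t * z) = z * t * z + z := by
    rw [add_mul, inv_mul_cancel_left₀ ht, ← mul_assoc]
  have hFvinv : F ((z⁻¹ * t⁻¹ * (z + t⁻¹)⁻¹)⁻¹) = F z := by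
    rw [hvinv, hwtz, hadd, hFztz, zero_add]
  have eqR := hR _ hv
  rw [hFvinv, hvinv, hpz, hFv] at eqR
  -- eqR : F z = -((z*t+1)*z * ((z*t+1)*z * (t*(z*t+1)⁻¹ * (t*(z*t+1)⁻¹ * F z)
  --        - z⁻¹ * (z⁻¹ * F z))))
  have hpc : ∀ X : D, (z * t + 1) * (z * (t * X)) = z * (t * ((z * t + 1) * X)) := by
    intro X
    have hcomm : (z * t + 1) * (z * t) = (z * t) * (z * t + 1) := by noncomm_ring
    calc (z * t + 1) * (z * (t * X)) = ((z * t + 1) * (z * t)) * X := by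
          simp only [mul_assoc]
      _ = ((z * t) * (z * t + 1)) * X := by rw [hcomm]
      _ = z * (t * ((z * t + 1) * X)) := by simp only [mul_assoc]
  have E1 : ((z * t + 1) * z) * (((z * t + 1) * z) * ((t * (z * t + 1)⁻¹) * ((t * (z * t + 1)⁻¹) * F z)))
      = (z * t + 1) * (z * (z * (t * (t * ((z * t + 1)⁻¹ * F z))))) := by
    simp only [mul_assoc]
    rw [hpc ((z * t + 1)⁻¹ * (t * ((z * t + 1)⁻¹ * F z))), mul_inv_cancel_left₀ hp]
  have E2 : ((z * t + 1) * z) * (((z * t + 1) * z) * (z⁻¹ * (z⁻¹ * F z)))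
      = (z * t + 1) * (z * ((z * t + 1) * (z⁻¹ * F z))) := by
    simp only [mul_assoc]
    rw [mul_inv_cancel_left₀ hz]
  rw [mul_sub, mul_sub, E1, E2] at eqR
  -- multiply by (z*t+1)⁻¹ on the left
  have eq2 := congrArg (fun u => (z * t + 1)⁻¹ * u) eqR
  simp only [mul_neg, mul_sub, inv_mul_cancel_left₀ hp] at eq2
  -- eq2 : (z*t+1)⁻¹ * F z = -(z*(z*(t*(t*((z*t+1)⁻¹*F z)))) - z*((z*t+1)*(z⁻¹*F z)))
  have eq3 := congrArg (fun u => z⁻¹ * u) eq2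
  simp only [mul_neg, mul_sub, inv_mul_cancel_left₀ hz] at eq3
  -- replace c by p * d in z⁻¹ * F z
  have hcd : F z = (z * t + 1) * ((z * t + 1)⁻¹ * F z) := (mul_inv_cancel_left₀ hp (F z)).symm
  rw [show z⁻¹ * F z = z⁻¹ * ((z * t + 1) * ((z * t + 1)⁻¹ * F z)) from by rw [← hcd]] at eq3
  have expand : (z * t + 1) * (z⁻¹ * ((z * t + 1) * ((z * t + 1)⁻¹ * F z)))
      = z * (t * (t * ((z * t + 1)⁻¹ * F z))) + z * (t * (z⁻¹ * ((z * t + 1)⁻¹ * F z)))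
        + (t * ((z * t + 1)⁻¹ * F z) + z⁻¹ * ((z * t + 1)⁻¹ * F z)) := by
    simp only [add_mul, mul_add, one_mul, mul_assoc, inv_mul_cancel_left₀ hz]
    abel
  rw [expand] at eq3
  -- eq3 : z⁻¹ * ((z*t+1)⁻¹ * F z) = -(z*(t*(t*d)) - (z*(t*(t*d)) + z*(t*(z⁻¹*d)) + (t*d + z⁻¹*d)))
  have eq4 : z * (t * (z⁻¹ * ((z * t + 1)⁻¹ * F z))) + t * ((z * t + 1)⁻¹ * F z) = 0 := by
    have h3 : z⁻¹ * ((z * t + 1)⁻¹ * F z)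
        = (z * (t * (z⁻¹ * ((z * t + 1)⁻¹ * F z))) + t * ((z * t + 1)⁻¹ * F z))
          + z⁻¹ * ((z * t + 1)⁻¹ * F z) := by
      conv_lhs => rw [eq3]
      abel
    exact add_eq_right.mp h3.symm
  have eq5 : z * (t * (z⁻¹ * ((z * t + 1)⁻¹ * F z))) = t * ((z * t + 1)⁻¹ * F z) := by
    have := eq_neg_of_add_eq_zero_left eq4
    rwa [hneg] at this
  have ht_d : t * ((z * t + 1)⁻¹ * F z) = t * (z * (z⁻¹ * ((z * t + 1)⁻¹ * F z))) := by
    rw [mul_inv_cancel_left₀ hz]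
  have eq6 : (z * t - t * z) * (z⁻¹ * ((z * t + 1)⁻¹ * F z)) = 0 := by
    rw [sub_mul, mul_assoc, mul_assoc, eq5, ht_d, ← mul_assoc, ← mul_assoc]
    exact sub_self _
  have hk0 : z * t - t * z ≠ 0 := sub_ne_zero.mpr hk
  have e0 : z⁻¹ * ((z * t + 1)⁻¹ * F z) = 0 := (mul_eq_zero.mp eq6).resolve_left hk0
  have e1 : (z * t + 1)⁻¹ * F z = 0 := by
    have := congrArg (fun u => z * u) e0
    simpa [mul_inv_cancel_left₀ hz] using this
  have := congrArg (fun u => (z * t + 1) * u) e1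
  simpa [mul_inv_cancel_left₀ hp] using this

/-- From the inversion law, F is a Jordan left derivation. -/
private lemma lemS (F : D → D)
    (hadd : ∀ x y : D, F (x + y) = F x + F y) (h1 : F 1 = 0)
    (hR : ∀ x : D, x ≠ 0 → F x⁻¹ = -(x⁻¹ * (x⁻¹ * F x))) :
    ∀ x : D, F (x * x) = 2 * (x * F x) := by
  have hF0 : F 0 = 0 := by
    have := hadd 0 0; rw [add_zero] at this; exact (left_eq_add.mp this)
  have hFneg : ∀ x, F (-x) = - F x := by
    intro x; have := hadd x (-x); rw [add_neg_cancel, hF0] at this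
    exact (neg_eq_of_add_eq_zero_right this.symm).symm
  have hFsub : ∀ x y, F (x - y) = F x - F y := by
    intro x y; rw [sub_eq_add_neg, hadd, hFneg, ← sub_eq_add_neg]
  intro x
  by_cases hx : x = 0
  · simp [hx, hF0]
  by_cases hx1 : x + 1 = 0
  · have hxm : x = -1 := eq_neg_of_add_eq_zero_left hx1
    subst hxm
    simp [h1, hFneg]
  -- main case
  have hFx1 : F (x + 1) = F x := by rw [hadd, h1, add_zero]
  have hs : (x + 1) * x ≠ 0 := mul_ne_zero hx1 hx
  have hc : x * (x + 1) = (x + 1) * x := by noncomm_ring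
  have hsinv : ((x + 1) * x)⁻¹ = x⁻¹ - (x + 1)⁻¹ := by
    rw [mul_inv_rev]
    have e : x⁻¹ - (x + 1)⁻¹ = x⁻¹ * ((x + 1) - x) * (x + 1)⁻¹ := by
      rw [mul_sub, inv_mul_cancel₀ hx, sub_mul, one_mul,
        mul_inv_cancel_right₀ hx1]
    rw [e, add_sub_cancel_left, mul_one]
  have hFs : F ((x + 1) * x) = F (x * x) + F x := by
    rw [show (x + 1) * x = x * x + x from by noncomm_ring, hadd]
  have eA := hR ((x + 1) * x) hs
  have eB : F (((x + 1) * x)⁻¹)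
      = -(x⁻¹ * (x⁻¹ * F x)) + (x + 1)⁻¹ * ((x + 1)⁻¹ * F x) := by
    rw [hsinv, hFsub, hR x hx, hR (x + 1) hx1, hFx1]
    abel
  have eq0 : -(((x + 1) * x)⁻¹ * (((x + 1) * x)⁻¹ * F ((x + 1) * x)))
      = -(x⁻¹ * (x⁻¹ * F x)) + (x + 1)⁻¹ * ((x + 1)⁻¹ * F x) :=
    eA.symm.trans eB
  have eq1 := congrArg (fun u => ((x + 1) * x) * (((x + 1) * x) * u)) eq0
  simp only [mul_neg, mul_add] at eq1
  rw [mul_inv_cancel_left₀ hs, mul_inv_cancel_left₀ hs] at eq1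
  -- helpers for conjugation by (x+1)
  have hconj : ∀ c : D, (x + 1) * (x * ((x + 1)⁻¹ * c)) = x * c := by
    intro c; rw [← mul_assoc, ← hc, mul_assoc, mul_inv_cancel_left₀ hx1]
  have hconj2 : ∀ c : D, (x + 1) * (x * (x * ((x + 1)⁻¹ * c))) = x * (x * c) := by
    intro c
    calc (x + 1) * (x * (x * ((x + 1)⁻¹ * c)))
        = x * ((x + 1) * (x * ((x + 1)⁻¹ * c))) := by
          rw [← mul_assoc, ← hc, mul_assoc]
      _ = x * (x * c) := by rw [hconj]
  -- simplify the two right-hand terms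
  have eD : ((x + 1) * x) * (((x + 1) * x) * (x⁻¹ * (x⁻¹ * F x)))
      = (x + 1) * ((x + 1) * F x) := by
    have i1 : ((x + 1) * x) * (x⁻¹ * (x⁻¹ * F x)) = (x + 1) * (x⁻¹ * F x) := by
      rw [mul_assoc, mul_inv_cancel_left₀ hx]
    rw [i1, mul_assoc (x + 1) x ((x + 1) * (x⁻¹ * F x)), ← mul_assoc x (x + 1) _,
      hc, mul_assoc, mul_inv_cancel_left₀ hx]
  have eE : ((x + 1) * x) * (((x + 1) * x) * ((x + 1)⁻¹ * ((x + 1)⁻¹ * F x)))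
      = x * (x * F x) := by
    simp only [mul_assoc]
    rw [show (x:D) + 1 = x + 1 from rfl]
    rw [hconj ((x + 1)⁻¹ * F x)]
    exact hconj2 (F x)
  rw [eD, eE, hFs] at eq1
  have h9 : F (x * x) + F x = (x + 1) * ((x + 1) * F x) - x * (x * F x) := by
    rw [← neg_neg (F (x * x) + F x), eq1]; abel
  exact (eq_sub_of_add_eq h9).trans (by noncomm_ring)

/-- main kill lemma -/
private lemma keyF (F : D → D)
    (hadd : ∀ x y : D, F (x + y) = F x + F y) (h1 : F 1 = 0)
    (hR : ∀ x : D, x ≠ 0 → F x⁻¹ = -(x⁻¹ * (x⁻¹ * F x)))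
    (a b : D) (hab : a * b ≠ b * a) : ∀ x, F x = 0 := by
  have hS := lemS F hadd h1 hR
  have hF0 : F 0 = 0 := by
    have := hadd 0 0; rw [add_zero] at this; exact (left_eq_add.mp this)
  have hA : ∀ x y : D, F (x * y + y * x) = 2 * (x * F y) + 2 * (y * F x) := by
    intro x y
    have e := hS (x + y)
    rw [show (x + y) * (x + y) = (x * x + (x * y + y * x)) + y * y from by
      noncomm_ring] at e
    rw [hadd, hadd, hS x, hS y, hadd x y] at e
    have e2 : F (x * y + y * x)
        = 2 * ((x + y) * (F x + F y)) - 2 * (x * F x) - 2 * (y * F y) := by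
      rw [← e]; abel
    rw [e2]; noncomm_ring
  by_cases h2 : (1 : D) + 1 = 0
  · -- characteristic 2
    have htwo0 : (2 : D) = 0 := by rw [← one_add_one_eq_two, h2]
    have hneg : ∀ c : D, -c = c := by
      intro c
      have hcc : c + c = 0 := by
        calc c + c = (1 + 1) * c := by rw [add_mul, one_mul]
          _ = 0 := by rw [h2, zero_mul]
      exact neg_eq_of_add_eq_zero_left hcc
    have hdd : ∀ c : D, c + c = 0 := by
      intro c
      calc c + c = (1 + 1) * c := by rw [add_mul, one_mul]
        _ = 0 := by rw [h2, zero_mul]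
    have hcyc : ∀ x y : D, F (x * y) = F (y * x) := by
      intro x y
      have e := hA x y
      rw [htwo0, zero_mul, zero_mul, add_zero, hadd] at e
      have := eq_neg_of_add_eq_zero_left e
      rwa [hneg] at this
    have hkill : ∀ x : D, (∃ y, x * y ≠ y * x) → F x = 0 := by
      rintro x ⟨y0, hy0⟩
      by_cases hx2 : ∃ y, x * x * y ≠ y * (x * x)
      · obtain ⟨y, hy⟩ := hx2
        have hFw : F (x * y + y * x) = 0 := by
          rw [hA, htwo0, zero_mul, zero_mul, add_zero]
        have hk1 : x * (x * y + y * x) ≠ (x * y + y * x) * x := by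
          intro hcEq
          apply hy
          have e0 : x * (x * y + y * x) - (x * y + y * x) * x = 0 :=
            sub_eq_zero_of_eq hcEq
          have e1 : x * x * y - y * (x * x) = 0 := by
            calc x * x * y - y * (x * x)
                = x * (x * y + y * x) - (x * y + y * x) * x := by noncomm_ring
              _ = 0 := e0
          exact sub_eq_zero.mp e1
        have hFxwx : F (x * (x * y + y * x) * x) = 0 := by
          rw [show x * (x * y + y * x) * x = (x * x * y) * x + (x * y) * (x * x) from by
            noncomm_ring, hadd, hcyc (x * x * y) x, hcyc (x * y) (x * x),
            show x * (x * x * y) = x * x * (x * y) from by noncomm_ring]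
          exact hdd _
        exact kill1core F hadd hR h2 x (x * y + y * x) hk1 hFw hFxwx
      · push_neg at hx2
        have hk0 : x * y0 - y0 * x ≠ 0 := sub_ne_zero.mpr hy0
        have hxk : x * (x * y0 - y0 * x) = (x * y0 - y0 * x) * x := by
          have e : x * (x * y0 - y0 * x) - (x * y0 - y0 * x) * x
              = x * x * y0 + y0 * (x * x) - 2 * (x * y0 * x) := by noncomm_ring
          have e2 : x * (x * y0 - y0 * x) - (x * y0 - y0 * x) * x = 0 := by
            rw [e, hx2 y0, htwo0, zero_mul]
            rw [sub_zero]
            exact hdd _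
          exact sub_eq_zero.mp e2
        have hxkinv : x * (x * y0 - y0 * x)⁻¹ = (x * y0 - y0 * x)⁻¹ * x := by
          have e1 : (x * y0 - y0 * x)⁻¹ * (x * (x * y0 - y0 * x)) = x := by
            rw [hxk, inv_mul_cancel_left₀ hk0]
          have e2 := congrArg (fun u => u * (x * y0 - y0 * x)⁻¹) e1
          rw [mul_assoc, mul_inv_cancel_right₀ hk0] at e2
          exact e2.symm
        have hxy1 : x * ((x * y0 - y0 * x)⁻¹ * y0) - ((x * y0 - y0 * x)⁻¹ * y0) * x = 1 := by
          calc x * ((x * y0 - y0 * x)⁻¹ * y0) - ((x * y0 - y0 * x)⁻¹ * y0) * x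
              = (x * y0 - y0 * x)⁻¹ * (x * y0) - (x * y0 - y0 * x)⁻¹ * (y0 * x) := by
                rw [← mul_assoc, hxkinv, mul_assoc, mul_assoc]
            _ = (x * y0 - y0 * x)⁻¹ * (x * y0 - y0 * x) := by rw [mul_sub]
            _ = 1 := inv_mul_cancel₀ hk0
        have hxy : x * ((x * y0 - y0 * x)⁻¹ * y0)
            = ((x * y0 - y0 * x)⁻¹ * y0) * x + 1 := eq_add_of_sub_eq' hxy1
        have key := hcyc x (((x * y0 - y0 * x)⁻¹ * y0) * x)
        have key2 : x * (((x * y0 - y0 * x)⁻¹ * y0) * x)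
            = (((x * y0 - y0 * x)⁻¹ * y0) * x) * x + x := by
          rw [← mul_assoc, hxy, add_mul, one_mul]
        have e3 : F ((((x * y0 - y0 * x)⁻¹ * y0) * x) * x) + F x
            = F ((((x * y0 - y0 * x)⁻¹ * y0) * x) * x) := by
          rw [← hadd, ← key2, key]
        exact add_eq_left.mp e3
    intro x
    by_cases hxc : ∃ y, x * y ≠ y * x
    · exact hkill x hxc
    · push_neg at hxc
      have hxa : F (x + a) = 0 := by
        apply hkill
        refine ⟨b, fun hcon => hab ?_⟩
        rw [add_mul, mul_add, hxc b] at hcon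
        exact add_left_cancel hcon
      have hFa : F a = 0 := hkill a ⟨b, hab⟩
      have := hadd x a
      rw [hxa, hFa, add_zero] at this
      exact this.symm
  · -- characteristic ≠ 2
    have two_ne : (2 : D) ≠ 0 := by rw [← one_add_one_eq_two]; exact h2
    have hB : ∀ x y : D, F (x * y * x)
        = x * x * F y + 3 * ((x * y) * F x) - y * x * F x := by
      intro x y
      have e1 := hA x (x * y + y * x)
      rw [show x * (x * y + y * x) + (x * y + y * x) * x
        = (x * x * y + y * (x * x)) + (x * y * x + x * y * x) from by noncomm_ring] at e1
      rw [hadd, hadd (x * y * x), hA (x * x) y, hA x y, hS x] at e1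
      have e1' : F (x * y * x) + F (x * y * x)
          = 2 * (x * (2 * (x * F y) + 2 * (y * F x))) + 2 * ((x * y + y * x) * F x)
            - (2 * (x * x * F y) + 2 * (y * (2 * (x * F x)))) := by
        rw [← e1]; abel
      have e2 : (2 : D) * F (x * y * x)
          = 2 * (x * x * F y + 3 * ((x * y) * F x) - y * x * F x) := by
        rw [two_mul, e1']; noncomm_ring
      exact mul_left_cancel₀ two_ne e2
    have hC : ∀ x y c : D, F (x * y * c + c * y * x)
        = (x * c + c * x) * F y + 3 * ((x * y) * F c) + 3 * ((c * y) * F x)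
          - y * x * F c - y * c * F x := by
      intro x y c
      have e := hB (x + c) y
      rw [show (x + c) * y * (x + c) = x * y * x + (x * y * c + c * y * x) + c * y * c
        from by noncomm_ring] at e
      rw [hadd, hadd, hB x y, hB c y, hadd x c] at e
      have e2 : F (x * y * c + c * y * x)
          = ((x + c) * (x + c) * F y + 3 * (((x + c) * y) * (F x + F c))
              - y * (x + c) * (F x + F c))
            - (x * x * F y + 3 * ((x * y) * F x) - y * x * F x)
            - (c * c * F y + 3 * ((c * y) * F c) - y * c * F c) := by
        rw [← e]; abel
      rw [e2]; noncomm_ring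
    have hvanish : ∀ x y : D, (x * x * y - 2 * (x * y * x) + y * (x * x)) * F x = 0 := by
      intro x y
      have w1 := hB x (x * y + y * x)
      rw [show x * (x * y + y * x) * x = x * x * y * x + x * y * (x * x) from by
        noncomm_ring, hA x y] at w1
      have w2 := hC (x * x) y x
      rw [hS x] at w2
      have e := w1.symm.trans w2
      have e4 : (2 : D) * ((x * x * y - 2 * (x * y * x) + y * (x * x)) * F x)
          = (x * x * (2 * (x * F y) + 2 * (y * F x)) + 3 * ((x * (x * y + y * x)) * F x)
              - (x * y + y * x) * x * F x)
            - ((x * x * x + x * (x * x)) * F y + 3 * ((x * x * y) * F x)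
              + 3 * ((x * y) * (2 * (x * F x))) - y * (x * x) * F x
              - y * x * (2 * (x * F x))) := by noncomm_ring
      rw [e, sub_self] at e4
      exact (mul_eq_zero.mp e4).resolve_left two_ne
    have hkill : ∀ x : D, (∃ y, x * y ≠ y * x) → F x = 0 := by
      rintro x ⟨y0, hy0⟩
      by_contra hFx
      have hall : ∀ v, x * x * v - 2 * (x * v * x) + v * (x * x) = 0 := fun v =>
        (mul_eq_zero.mp (hvanish x v)).resolve_right hFx
      have hk0 : x * y0 - y0 * x ≠ 0 := sub_ne_zero.mpr hy0
      have hxk : x * (x * y0 - y0 * x) = (x * y0 - y0 * x) * x := by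
        have e : x * (x * y0 - y0 * x) - (x * y0 - y0 * x) * x
            = x * x * y0 - 2 * (x * y0 * x) + y0 * (x * x) := by noncomm_ring
        rw [hall y0] at e
        exact sub_eq_zero.mp e
      have hxkinv : x * (x * y0 - y0 * x)⁻¹ = (x * y0 - y0 * x)⁻¹ * x := by
        have e1 : (x * y0 - y0 * x)⁻¹ * (x * (x * y0 - y0 * x)) = x := by
          rw [hxk, inv_mul_cancel_left₀ hk0]
        have e2 := congrArg (fun u => u * (x * y0 - y0 * x)⁻¹) e1
        rw [mul_assoc, mul_inv_cancel_right₀ hk0] at e2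
        exact e2.symm
      have hxy1 : x * ((x * y0 - y0 * x)⁻¹ * y0) - ((x * y0 - y0 * x)⁻¹ * y0) * x = 1 := by
        calc x * ((x * y0 - y0 * x)⁻¹ * y0) - ((x * y0 - y0 * x)⁻¹ * y0) * x
            = (x * y0 - y0 * x)⁻¹ * (x * y0) - (x * y0 - y0 * x)⁻¹ * (y0 * x) := by
              rw [← mul_assoc, hxkinv, mul_assoc, mul_assoc]
          _ = (x * y0 - y0 * x)⁻¹ * (x * y0 - y0 * x) := by rw [mul_sub]
          _ = 1 := inv_mul_cancel₀ hk0
      set Y := (x * y0 - y0 * x)⁻¹ * y0 with hYdef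
      have hYY : x * (Y * Y) - (Y * Y) * x = Y + Y := by
        have e : x * (Y * Y) - (Y * Y) * x
            = (x * Y - Y * x) * Y + Y * (x * Y - Y * x) := by noncomm_ring
        rw [e, hxy1, one_mul, mul_one]
      have con : (0 : D) = 2 := by
        calc (0 : D) = x * x * (Y * Y) - 2 * (x * (Y * Y) * x) + (Y * Y) * (x * x) :=
              (hall (Y * Y)).symm
          _ = x * (x * (Y * Y) - (Y * Y) * x) - (x * (Y * Y) - (Y * Y) * x) * x := by
              noncomm_ring
          _ = x * (Y + Y) - (Y + Y) * x := by rw [hYY]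
          _ = (x * Y - Y * x) + (x * Y - Y * x) := by noncomm_ring
          _ = 2 := by rw [hxy1, one_add_one_eq_two]
      exact two_ne con.symm
    intro x
    by_cases hxc : ∃ y, x * y ≠ y * x
    · exact hkill x hxc
    · push_neg at hxc
      have hxa : F (x + a) = 0 := by
        apply hkill
        refine ⟨b, fun hcon => hab ?_⟩
        rw [add_mul, mul_add, hxc b] at hcon
        exact add_left_cancel hcon
      have hFa : F a = 0 := hkill a ⟨b, hab⟩
      have := hadd x a
      rw [hxa, hFa, add_zero] at this
      exact this.symm

end Aux

theorem stmt_3 {D : Type*} [DivisionRing D]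
    (hnc : ∃ a b : D, a * b ≠ b * a)
    (f g : D → D)
    (hf : ∀ x y : D, f (x + y) = f x + f y)
    (hg : ∀ x y : D, g (x + y) = g x + g y)
    (h : ∀ x : D, x ≠ 0 → f x = x ^ 2 * g x⁻¹) :
    f = g ∧ ∀ x : D, f x = x * f 1 := by
  obtain ⟨a, b, hab⟩ := hnc
  -- basics
  have hf0 : f 0 = 0 := by
    have := hf 0 0; rw [add_zero] at this
    exact (left_eq_add.mp this)
  have hg0 : g 0 = 0 := by
    have := hg 0 0; rw [add_zero] at this
    exact (left_eq_add.mp this)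
  have hfneg : ∀ x, f (-x) = - f x := by
    intro x; have := hf x (-x); rw [add_neg_cancel, hf0] at this
    exact (neg_eq_of_add_eq_zero_right this.symm).symm
  have hgneg : ∀ x, g (-x) = - g x := by
    intro x; have := hg x (-x); rw [add_neg_cancel, hg0] at this
    exact (neg_eq_of_add_eq_zero_right this.symm).symm
  have hgsub : ∀ x y, g (x - y) = g x - g y := by
    intro x y; rw [sub_eq_add_neg, hg, hgneg, ← sub_eq_add_neg]
  have h1 : f 1 = g 1 := by have := h 1 one_ne_zero; simpa using this
  -- Step 1 : f x + g x = x * f 1 + x * f 1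
  have hfg : ∀ x : D, f x + g x = x * f 1 + x * f 1 := by
    intro x
    by_cases hx : x = 0
    · simp [hx, hf0, hg0]
    by_cases hx1 : 1 + x = 0
    · have hxm : x = -1 := by
        have := eq_neg_of_add_eq_zero_right hx1; exact this
      subst hxm
      rw [hfneg 1, hgneg 1, ← h1]
      noncomm_ring
    -- main case
    have hxinv : x⁻¹ ≠ 0 := inv_ne_zero hx
    have hx1' : x + 1 ≠ 0 := by rwa [add_comm]
    have hu2 : (1 : D) + x⁻¹ = x⁻¹ * (x + 1) := by
      rw [mul_add, inv_mul_cancel₀ hx, mul_one]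
    have hun : (1 : D) + x⁻¹ ≠ 0 := by
      rw [hu2]; exact mul_ne_zero hxinv hx1'
    have huinv : ((1 : D) + x⁻¹)⁻¹ = (x + 1)⁻¹ * x := by
      rw [hu2, mul_inv_rev, inv_inv]
    have hkey : ((1 : D) + x)⁻¹ = 1 - ((1 : D) + x⁻¹)⁻¹ := by
      rw [huinv]
      have e : (1 : D) - (x + 1)⁻¹ * x = (x + 1)⁻¹ * ((x + 1) - x) := by
        rw [mul_sub, inv_mul_cancel₀ hx1']
      rw [e, add_sub_cancel_left, mul_one, add_comm]
    have e1 : f 1 + f x = (1 + x) ^ 2 * g ((1 + x)⁻¹) := by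
      rw [← hf 1 x]; exact h (1 + x) hx1
    have e3 : f x⁻¹ = (x⁻¹) ^ 2 * g x := by
      have := h x⁻¹ hxinv; rwa [inv_inv] at this
    have hu2ne : ((1 : D) + x⁻¹) ^ 2 ≠ 0 := pow_ne_zero 2 hun
    have e2 : g ((1 : D) + x⁻¹)⁻¹ = (((1 : D) + x⁻¹) ^ 2)⁻¹ * (f 1 + f x⁻¹) := by
      have hfu : f (1 + x⁻¹) = ((1 : D) + x⁻¹) ^ 2 * g ((1 : D) + x⁻¹)⁻¹ := h _ hun
      rw [hf 1 x⁻¹] at hfu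
      rw [hfu, inv_mul_cancel_left₀ hu2ne]
    have e4 : g ((1 + x)⁻¹) = g 1 - g ((1 : D) + x⁻¹)⁻¹ := by
      rw [hkey, hgsub]
    have KI : (1 + x) ^ 2 * (((1 : D) + x⁻¹) ^ 2)⁻¹ = x * x := by
      rw [pow_two, pow_two, mul_inv_rev, huinv, add_comm (1 : D) x]
      simp only [mul_assoc]
      rw [mul_inv_cancel_left₀ hx1']
      rw [← mul_assoc, show (x + 1) * x = x * (x + 1) from by noncomm_ring,
        mul_assoc, mul_inv_cancel_left₀ hx1']
    have e5 : f 1 + f x = (1 + x) ^ 2 * g 1 - (x * x * f 1 + g x) := by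
      rw [e1, e4, mul_sub, e2, e3, ← mul_assoc, KI, mul_add]
      congr 2
      rw [pow_two]
      simp only [mul_assoc]
      rw [mul_inv_cancel_left₀ hx, mul_inv_cancel_left₀ hx]
    have e6 : f 1 + f x + (x * x * f 1 + g x) = (1 + x) ^ 2 * g 1 := by
      rw [e5]; abel
    rw [← h1] at e6
    have e7 : f x + g x = (1 + x) ^ 2 * f 1 - (f 1 + x * x * f 1) := by
      rw [← e6]; abel
    rw [e7]; noncomm_ring
  
  -- Step 2 : define F and its inversion law
  set F : D → D := fun x => f x - x * f 1 with hFdef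
  have hFadd : ∀ x y : D, F (x + y) = F x + F y := by
    intro x y; simp only [hFdef, hf x y]; noncomm_ring
  have hF1 : F 1 = 0 := by simp [hFdef]
  have hFR : ∀ x : D, x ≠ 0 → F x⁻¹ = -(x⁻¹ * (x⁻¹ * F x)) := by
    intro x hx
    have e1 : g x⁻¹ = x⁻¹ * f 1 + x⁻¹ * f 1 - f x⁻¹ := eq_sub_of_add_eq' (hfg x⁻¹)
    have e2 := h x hx
    rw [e1] at e2
    have e3 : f x = x * f 1 + x * f 1 - x * (x * f x⁻¹) := by
      rw [e2, pow_two, mul_sub, mul_add]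
      simp only [mul_assoc]
      rw [mul_inv_cancel_left₀ hx]
    have e4 : x * (x * f x⁻¹) = x * f 1 + x * f 1 - f x := by
      rw [e3]; abel
    show f x⁻¹ - x⁻¹ * f 1 = -(x⁻¹ * (x⁻¹ * (f x - x * f 1)))
    have goal' : x * (x * (f x⁻¹ - x⁻¹ * f 1))
        = x * (x * (-(x⁻¹ * (x⁻¹ * (f x - x * f 1))))) := by
      have l1 : x * (f x⁻¹ - x⁻¹ * f 1) = x * f x⁻¹ - f 1 := by
        rw [mul_sub, mul_inv_cancel_left₀ hx]
      have r1 : x * (x * (-(x⁻¹ * (x⁻¹ * (f x - x * f 1))))) = -(f x - x * f 1) := by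
        rw [mul_neg, mul_neg, mul_inv_cancel_left₀ hx, mul_inv_cancel_left₀ hx]
      rw [l1, r1, mul_sub, e4]
      abel
    exact mul_left_cancel₀ hx (mul_left_cancel₀ hx goal')
  have hF0 : ∀ x, F x = 0 := keyF F hFadd hF1 hFR a b hab
  have hfx : ∀ x : D, f x = x * f 1 := by
    intro x; have := hF0 x; simp only [hFdef] at this
    exact sub_eq_zero.mp this
  refine ⟨funext fun x => ?_, hfx⟩
  have h2 := hfg x
  rw [hfx x] at h2
  have hgx : g x = x * f 1 := add_left_cancel h2
  rw [hfx x, hgx]
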